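/- There exists a constant C > 0 such that for every even natural number N ≥ 2 and every natural number k ≥ N, the degeneracy-averaged variance of the collective Lamb shifts satisfies Var(Λ(k)) = (1/2^N) · ∑_{j=0}^{N/2} d_j · Tr( L(2j, k − N/2 + j)² ) ≤ C · N · k, where d_j = N!(2j+1)/((N/2−j)!(N/2+j+1)!) and L(J,K') is the Lamb-shift coupling matrix (with Tr(L(0,·)²) = 0 for the 1×1 block j = 0). In other words, the root-mean-square collective Lamb shift, averaged over the degeneracies of all angular momentum subspaces, is O(√(Nk)) for k ≥ N. -/

import Mathlib

/-- The Lamb-shift coupling matrix `L(J, K')`: the `(min J K' + 1) × (min J K' + 1)`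
real symmetric tridiagonal matrix with zero diagonal and off-diagonal entries
`L_{α,α+1} = L_{α+1,α} = √(α (J+1-α) (K'+1-α))` for `α = 1, …, min J K'` (1-based);
in 0-based indexing the `(i, i+1)` entry is `√((i+1) (J-i) (K'-i))`.  For `J = 0`
this is the `1 × 1` zero matrix. -/
noncomputable def lambMatrix (J K' : ℕ) :
    Matrix (Fin (min J K' + 1)) (Fin (min J K' + 1)) ℝ :=
  Matrix.of fun i j =>
    if (j : ℕ) = (i : ℕ) + 1 then
      Real.sqrt (((i : ℕ) + 1) * ((J : ℝ) - (i : ℕ)) * ((K' : ℝ) - (i : ℕ)))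
    else if (i : ℕ) = (j : ℕ) + 1 then
      Real.sqrt (((j : ℕ) + 1) * ((J : ℝ) - (j : ℕ)) * ((K' : ℝ) - (j : ℕ)))
    else 0

/-- The degeneracy `d_j = N!(2j+1)/((N/2-j)!(N/2+j+1)!)` of the collective
angular-momentum-`j` subspace of `N` spin-1/2 particles (as a real number). -/
noncomputable def degeneracy (N j : ℕ) : ℝ :=
  (Nat.factorial N : ℝ) * (2 * (j : ℝ) + 1) /
    ((Nat.factorial (N / 2 - j) : ℝ) * (Nat.factorial (N / 2 + j + 1) : ℝ))

lemma deg_nonneg (N j : ℕ) : 0 ≤ degeneracy N j := by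
  unfold degeneracy; positivity

/-- Second central moment of the binomial coefficients:
`∑ C(n,i) (2i-n)² = n 2ⁿ`. -/
lemma moment2 (n : ℕ) :
    ∑ i ∈ Finset.range (n+1), (n.choose i : ℝ) * (2*(i:ℝ) - n)^2 = (n:ℝ) * 2^n := by
  induction n with
  | zero => norm_num
  | succ n ih =>
    set g : ℕ → ℝ := fun i => (2*(i:ℝ) - ((n:ℝ)+1))^2 with hg
    have hsum2n : ∑ i ∈ Finset.range (n+1), (n.choose i : ℝ) = 2^n := by
      exact_mod_cast congrArg (Nat.cast (R := ℝ)) (Nat.sum_range_choose n)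
    have step1 : ∑ i ∈ Finset.range (n+2), ((n+1).choose i : ℝ) * g i
        = ∑ i ∈ Finset.range (n+1), ((n.choose i : ℝ) * g (i+1) + (n.choose (i+1) : ℝ) * g (i+1)) + g 0 := by
      rw [Finset.sum_range_succ' (fun i => ((n+1).choose i : ℝ) * g i) (n+1)]
      simp only [Nat.choose_succ_succ, Nat.choose_zero_right, Nat.cast_one, one_mul]
      push_cast
      congr 1
      apply Finset.sum_congr rfl
      intro i _
      ring
    have step3 : ∑ i ∈ Finset.range (n+1), (n.choose (i+1) : ℝ) * g (i+1)
        = ∑ i ∈ Finset.range (n+1), (n.choose i : ℝ) * g i - g 0 := by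
      have h := Finset.sum_range_succ' (fun i => (n.choose i : ℝ) * g i) (n+1)
      rw [Finset.sum_range_succ (fun i => (n.choose i : ℝ) * g i) (n+1),
        Nat.choose_eq_zero_of_lt (Nat.lt_succ_self n)] at h
      simp only [Nat.cast_zero, zero_mul, add_zero, Nat.choose_zero_right, Nat.cast_one, one_mul] at h
      linarith [h]
    have step4 : ∀ i : ℕ, g (i+1) + g i = 2*(2*(i:ℝ) - n)^2 + 2 := by
      intro i; simp only [hg]; push_cast; ring
    have key : ∑ i ∈ Finset.range (n+2), ((n+1).choose i : ℝ) * g i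
        = ((n:ℝ)+1) * 2^(n+1) := by
      calc ∑ i ∈ Finset.range (n+2), ((n+1).choose i : ℝ) * g i
          = ∑ i ∈ Finset.range (n+1), ((n.choose i : ℝ) * g (i+1) + (n.choose (i+1) : ℝ) * g (i+1)) + g 0 := step1
        _ = ∑ i ∈ Finset.range (n+1), (n.choose i : ℝ) * g (i+1)
              + (∑ i ∈ Finset.range (n+1), (n.choose i : ℝ) * g i - g 0) + g 0 := by
              rw [Finset.sum_add_distrib, step3]
        _ = ∑ i ∈ Finset.range (n+1), ((n.choose i : ℝ) * g (i+1) + (n.choose i : ℝ) * g i) := by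
              rw [Finset.sum_add_distrib]; ring
        _ = ∑ i ∈ Finset.range (n+1), (n.choose i : ℝ) * (2*(2*(i:ℝ) - n)^2 + 2) := by
              apply Finset.sum_congr rfl; intro i _; rw [← step4]; ring
        _ = 2 * (∑ i ∈ Finset.range (n+1), (n.choose i : ℝ) * (2*(i:ℝ) - n)^2)
              + 2 * ∑ i ∈ Finset.range (n+1), (n.choose i : ℝ) := by
              rw [Finset.mul_sum, Finset.mul_sum, ← Finset.sum_add_distrib]
              apply Finset.sum_congr rfl; intro i _; ring
        _ = ((n:ℝ)+1) * 2^(n+1) := by rw [ih, hsum2n]; ring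
    have hcast : ∑ i ∈ Finset.range (n+1+1), ((n+1).choose i : ℝ) * (2*(i:ℝ) - ((n:ℕ)+1:ℕ))^2
        = ∑ i ∈ Finset.range (n+2), ((n+1).choose i : ℝ) * g i := by
      apply Finset.sum_congr rfl; intro i _; simp only [hg]; push_cast; ring
    rw [hcast, key]; push_cast; ring

/-- The degeneracy is a difference of two binomial coefficients. -/
lemma deg_eq (m j : ℕ) (hj : j ≤ m) :
    degeneracy (2*m) j = ((2*m).choose (m-j) : ℝ) - ((2*m).choose (m+j+1) : ℝ) := by
  have hdiv : 2*m/2 = m := by omega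
  rcases eq_or_lt_of_le hj with rfl | hjm
  · have h1 : (2*j).choose (j-j) = 1 := by simp
    have h2 : (2*j).choose (j+j+1) = 0 := Nat.choose_eq_zero_of_lt (by omega)
    rw [degeneracy, h1, h2]
    have hd : 2*j/2 = j := by omega
    rw [hd]
    have hjj : j - j = 0 := by omega
    rw [hjj]
    have hfact : ((2*j+1).factorial : ℝ) = ((2*j:ℕ):ℝ) * (2*j).factorial + (2*j).factorial := by
      have := Nat.factorial_succ (2*j)
      push_cast [this]; ring
    rw [show j + j + 1 = 2*j + 1 by omega, hfact]
    have hpos : ((2*j).factorial : ℝ) > 0 := by positivity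
    rw [Nat.factorial_zero]
    field_simp
    push_cast
    ring
  · have hc1 : ((2*m).choose (m-j) : ℝ)
        = ((2*m).factorial : ℝ) / ((m-j).factorial * (m+j).factorial) := by
      rw [Nat.cast_choose ℝ (by omega : m - j ≤ 2*m), show 2*m - (m-j) = m+j by omega]
    have hc2 : ((2*m).choose (m+j+1) : ℝ)
        = ((2*m).factorial : ℝ) / ((m+j+1).factorial * (m-j-1).factorial) := by
      rw [Nat.cast_choose ℝ (by omega : m + j + 1 ≤ 2*m), show 2*m - (m+j+1) = m-j-1 by omega]
    have hf1 : ((m+j+1).factorial : ℝ) = ((m:ℝ)+j+1) * (m+j).factorial := by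
      have := Nat.factorial_succ (m+j); push_cast [this]; ring
    have hf2 : ((m-j).factorial : ℝ) = ((m:ℝ)-j) * (m-j-1).factorial := by
      have h := Nat.factorial_succ (m-j-1)
      rw [show m-j-1+1 = m-j by omega] at h
      rw [h]
      push_cast [Nat.cast_sub (by omega : j ≤ m), Nat.cast_sub (by omega : j + 1 ≤ m)]
      ring_nf
    rw [degeneracy, hdiv, hc1, hc2, hf1, hf2]
    have p1 : ((m+j).factorial : ℝ) > 0 := by positivity
    have p2 : ((m-j-1).factorial : ℝ) > 0 := by positivity
    have p3 : ((m:ℝ)-j) > 0 := by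
      have : (j:ℝ) < m := by exact_mod_cast hjm
      linarith
    have p4 : ((m:ℝ)+j+1) > 0 := by positivity
    field_simp
    ring

lemma sum_ite_le {n : ℕ} {B : ℝ} (hB : 0 ≤ B) (p : Fin n → Prop) [DecidablePred p]
    (hp : ∀ a b, p a → p b → a = b) :
    ∑ α : Fin n, (if p α then B else 0) ≤ B := by
  classical
  rw [← Finset.sum_filter, Finset.sum_const]
  have hcard : (Finset.univ.filter p).card ≤ 1 := by
    apply Finset.card_le_one.mpr
    intro a ha b hb
    simp only [Finset.mem_filter] at ha hb
    exact hp a b ha.2 hb.2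
  calc (Finset.univ.filter p).card • B = ((Finset.univ.filter p).card : ℝ) * B := nsmul_eq_mul _ _
    _ ≤ 1 * B := mul_le_mul_of_nonneg_right (by exact_mod_cast hcard) hB
    _ = B := one_mul B

lemma entry_bound (J K' : ℕ) (i α : Fin (min J K' + 1)) :
    lambMatrix J K' i α * lambMatrix J K' α i ≤
      (if (α:ℕ) = (i:ℕ) + 1 then ((J:ℝ)+1)*J*K' else 0)
      + (if (i:ℕ) = (α:ℕ) + 1 then ((J:ℝ)+1)*J*K' else 0) := by
  have hB : (0:ℝ) ≤ ((J:ℝ)+1)*J*K' := by positivity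
  have hx : ∀ β : Fin (min J K' + 1),
      ((β:ℕ) + 1) * ((J : ℝ) - (β:ℕ)) * ((K' : ℝ) - (β:ℕ)) ≤ ((J:ℝ)+1)*J*K' ∧
      0 ≤ ((β:ℕ) + 1) * ((J : ℝ) - (β:ℕ)) * ((K' : ℝ) - (β:ℕ)) := by
    intro β
    have hβ : (β:ℕ) ≤ min J K' := Nat.lt_succ_iff.mp β.isLt
    have h1 : ((β:ℕ):ℝ) ≤ J := by
      exact_mod_cast le_trans hβ (min_le_left _ _)
    have h2 : ((β:ℕ):ℝ) ≤ K' := by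
      exact_mod_cast le_trans hβ (min_le_right _ _)
    have hb0 : (0:ℝ) ≤ ((β:ℕ):ℝ) := by positivity
    constructor
    · apply mul_le_mul _ (by linarith) (by linarith) (by positivity)
      apply mul_le_mul (by linarith) (by linarith) (by linarith) (by positivity)
    · apply mul_nonneg (mul_nonneg (by positivity) (by linarith)) (by linarith)
  by_cases h1 : (α:ℕ) = (i:ℕ) + 1
  · have h2 : ¬ ((i:ℕ) = (α:ℕ) + 1) := by omega
    have e1 : lambMatrix J K' i α
        = Real.sqrt (((i:ℕ)+1) * ((J:ℝ)-(i:ℕ)) * ((K':ℝ)-(i:ℕ))) := by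
      simp only [lambMatrix, Matrix.of_apply]; rw [if_pos h1]
    have e2 : lambMatrix J K' α i
        = Real.sqrt (((i:ℕ)+1) * ((J:ℝ)-(i:ℕ)) * ((K':ℝ)-(i:ℕ))) := by
      simp only [lambMatrix, Matrix.of_apply]; rw [if_neg h2, if_pos h1]
    rw [e1, e2, if_pos h1, if_neg h2, Real.mul_self_sqrt (hx i).2, add_zero]
    exact (hx i).1
  · by_cases h2 : (i:ℕ) = (α:ℕ) + 1
    · have e1 : lambMatrix J K' i α
          = Real.sqrt (((α:ℕ)+1) * ((J:ℝ)-(α:ℕ)) * ((K':ℝ)-(α:ℕ))) := by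
        simp only [lambMatrix, Matrix.of_apply]; rw [if_neg h1, if_pos h2]
      have e2 : lambMatrix J K' α i
          = Real.sqrt (((α:ℕ)+1) * ((J:ℝ)-(α:ℕ)) * ((K':ℝ)-(α:ℕ))) := by
        simp only [lambMatrix, Matrix.of_apply]; rw [if_pos h2]
      rw [e1, e2, if_neg h1, if_pos h2, Real.mul_self_sqrt (hx α).2, zero_add]
      exact (hx α).1
    · have e1 : lambMatrix J K' i α = 0 := by
        simp only [lambMatrix, Matrix.of_apply]; rw [if_neg h1, if_neg h2]
      rw [e1, zero_mul, if_neg h1, if_neg h2, add_zero]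

/-- Crude bound on the trace of the squared coupling matrix. -/
lemma trace_lamb_sq_le (J K' : ℕ) :
    Matrix.trace (lambMatrix J K' * lambMatrix J K') ≤ 2*((J:ℝ)+1)^2*J*K' := by
  have hB : (0:ℝ) ≤ ((J:ℝ)+1)*J*K' := by positivity
  have hdiag : ∀ i : Fin (min J K' + 1),
      (lambMatrix J K' * lambMatrix J K') i i ≤ 2*(((J:ℝ)+1)*J*K') := by
    intro i
    rw [Matrix.mul_apply]
    calc ∑ α, lambMatrix J K' i α * lambMatrix J K' α i
        ≤ ∑ α : Fin (min J K' + 1),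
            ((if (α:ℕ) = (i:ℕ) + 1 then ((J:ℝ)+1)*J*K' else 0)
              + (if (i:ℕ) = (α:ℕ) + 1 then ((J:ℝ)+1)*J*K' else 0)) :=
          Finset.sum_le_sum (fun α _ => entry_bound J K' i α)
      _ = (∑ α : Fin (min J K' + 1), (if (α:ℕ) = (i:ℕ) + 1 then ((J:ℝ)+1)*J*K' else 0))
          + ∑ α : Fin (min J K' + 1), (if (i:ℕ) = (α:ℕ) + 1 then ((J:ℝ)+1)*J*K' else 0) :=
          Finset.sum_add_distrib
      _ ≤ ((J:ℝ)+1)*J*K' + ((J:ℝ)+1)*J*K' := by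
          apply add_le_add
          · exact sum_ite_le hB _ (fun a b ha hb => Fin.ext (by omega))
          · exact sum_ite_le hB _ (fun a b ha hb => Fin.ext (by omega))
      _ = 2*(((J:ℝ)+1)*J*K') := by ring
  calc Matrix.trace (lambMatrix J K' * lambMatrix J K')
      = ∑ i, (lambMatrix J K' * lambMatrix J K') i i := rfl
    _ ≤ ∑ _i : Fin (min J K' + 1), 2*(((J:ℝ)+1)*J*K') := Finset.sum_le_sum (fun i _ => hdiag i)
    _ = (min J K' + 1 : ℕ) * (2*(((J:ℝ)+1)*J*K')) := by
        rw [Finset.sum_const, Finset.card_univ, Fintype.card_fin, nsmul_eq_mul]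
    _ ≤ ((J:ℝ)+1) * (2*(((J:ℝ)+1)*J*K')) := by
        apply mul_le_mul_of_nonneg_right _ (by positivity)
        have h : min J K' + 1 ≤ J + 1 := by omega
        exact_mod_cast h
    _ = 2*((J:ℝ)+1)^2*J*K' := by ring

/-- Weighted third-moment bound for the degeneracies. -/
lemma sum_deg_cube_le (m : ℕ) :
    ∑ j ∈ Finset.range (m+1), degeneracy (2*m) j * (j:ℝ)^3
      ≤ (3/2*(m:ℝ) + 1) * 2^(2*m) := by
  set c : ℕ → ℝ := fun r => ((2*m).choose r : ℝ) with hc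
  have hcnn : ∀ r, 0 ≤ c r := fun r => by simp only [hc]; positivity
  have claimA : ∑ j ∈ Finset.range (m+1), c (m+j+1) * (j:ℝ)^3
      = ∑ j ∈ Finset.range (m+1), c (m-j) * ((j-1 : ℕ):ℝ)^3 := by
    rw [Finset.sum_range_succ (fun j => c (m+j+1) * (j:ℝ)^3) m]
    rw [Finset.sum_range_succ' (fun j => c (m-j) * ((j-1 : ℕ):ℝ)^3) m]
    have hz1 : c (m+m+1) = 0 := by
      simp only [hc]; exact_mod_cast Nat.choose_eq_zero_of_lt (by omega)
    have hz2 : c (m-0) * ((0-1 : ℕ):ℝ)^3 = 0 := by norm_num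
    rw [hz1, hz2, zero_mul, add_zero, add_zero]
    apply Finset.sum_congr rfl
    intro j hj
    have hjm : j < m := Finset.mem_range.mp hj
    have hsym : (2*m).choose (m+j+1) = (2*m).choose (m-(j+1)) := by
      rw [show m - (j+1) = 2*m - (m+j+1) by omega]
      exact (Nat.choose_symm (by omega)).symm
    simp only [hc, hsym, Nat.add_sub_cancel]
  have E6 : ∑ j ∈ Finset.range (m+1), c (m-j) ≤ 2^(2*m) := by
    have hrefl := Finset.sum_range_reflect (fun j => c j) (m+1)
    simp only [Nat.add_sub_cancel] at hrefl
    rw [hrefl]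
    calc ∑ j ∈ Finset.range (m+1), c j
        ≤ ∑ j ∈ Finset.range (2*m+1), c j := by
          apply Finset.sum_le_sum_of_subset_of_nonneg
            (Finset.range_subset_range.mpr (by omega)) (fun i _ _ => hcnn i)
      _ = 2^(2*m) := by
          simp only [hc]
          exact_mod_cast congrArg (Nat.cast (R := ℝ)) (Nat.sum_range_choose (2*m))
  have E7 : ∑ j ∈ Finset.range (m+1), c (m-j) * (j:ℝ)^2 ≤ (m:ℝ) * 2^(2*m) / 2 := by
    have hrefl := Finset.sum_range_reflect (fun j => c j * ((m-j : ℕ):ℝ)^2) (m+1)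
    simp only [Nat.add_sub_cancel] at hrefl
    have step0 : ∑ j ∈ Finset.range (m+1), c (m-j) * (j:ℝ)^2
        = ∑ j ∈ Finset.range (m+1), c (m-j) * ((m-(m-j) : ℕ):ℝ)^2 := by
      apply Finset.sum_congr rfl
      intro j hj
      have hjm : j ≤ m := by
        have := Finset.mem_range.mp hj; omega
      rw [show m - (m-j) = j by omega]
    rw [step0, hrefl]
    have step1 : ∑ j ∈ Finset.range (m+1), c j * ((m-j : ℕ):ℝ)^2
        = ∑ j ∈ Finset.range (m+1), c j * ((m:ℝ)-(j:ℝ))^2 := by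
      apply Finset.sum_congr rfl
      intro j hj
      have hjm : j ≤ m := by
        have := Finset.mem_range.mp hj; omega
      rw [Nat.cast_sub hjm]
    rw [step1]
    have step2 : ∑ j ∈ Finset.range (m+1), c j * ((m:ℝ)-(j:ℝ))^2
        ≤ ∑ j ∈ Finset.range (2*m+1), c j * ((m:ℝ)-(j:ℝ))^2 := by
      apply Finset.sum_le_sum_of_subset_of_nonneg
        (Finset.range_subset_range.mpr (by omega))
      intro i _ _
      have := hcnn i
      positivity
    have step3 : ∑ j ∈ Finset.range (2*m+1), c j * ((m:ℝ)-(j:ℝ))^2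
        = (m:ℝ) * 2^(2*m) / 2 := by
      have hm2 := moment2 (2*m)
      have hq : ∑ j ∈ Finset.range (2*m+1), c j * ((m:ℝ)-(j:ℝ))^2
          = (1/4) * ∑ i ∈ Finset.range (2*m+1), ((2*m).choose i : ℝ) * (2*(i:ℝ) - (2*m:ℕ))^2 := by
        rw [Finset.mul_sum]
        apply Finset.sum_congr rfl
        intro i _
        simp only [hc]
        push_cast
        ring
      rw [hq, hm2]
      push_cast
      ring
    linarith
  have main : ∑ j ∈ Finset.range (m+1), degeneracy (2*m) j * (j:ℝ)^3
      = ∑ j ∈ Finset.range (m+1), c (m-j) * ((j:ℝ)^3 - ((j-1 : ℕ):ℝ)^3) := by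
    have h : ∑ j ∈ Finset.range (m+1), degeneracy (2*m) j * (j:ℝ)^3
        = ∑ j ∈ Finset.range (m+1), (c (m-j) * (j:ℝ)^3 - c (m+j+1) * (j:ℝ)^3) := by
      apply Finset.sum_congr rfl
      intro j hj
      have hjm : j ≤ m := by
        have := Finset.mem_range.mp hj; omega
      rw [deg_eq m j hjm]
      simp only [hc]
      ring
    rw [h, Finset.sum_sub_distrib, claimA, ← Finset.sum_sub_distrib]
    apply Finset.sum_congr rfl
    intro j _
    ring
  rw [main]
  calc ∑ j ∈ Finset.range (m+1), c (m-j) * ((j:ℝ)^3 - ((j-1 : ℕ):ℝ)^3)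
      ≤ ∑ j ∈ Finset.range (m+1), c (m-j) * (3*(j:ℝ)^2 + 1) := by
        apply Finset.sum_le_sum
        intro j _
        apply mul_le_mul_of_nonneg_left _ (hcnn _)
        rcases j with _ | i
        · norm_num
        · simp only [Nat.add_sub_cancel]
          push_cast
          have h0 : (0:ℝ) ≤ (i:ℝ) := Nat.cast_nonneg i
          nlinarith [h0]
    _ = 3 * (∑ j ∈ Finset.range (m+1), c (m-j) * (j:ℝ)^2)
          + ∑ j ∈ Finset.range (m+1), c (m-j) := by
        rw [Finset.mul_sum, ← Finset.sum_add_distrib]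
        apply Finset.sum_congr rfl
        intro j _
        ring
    _ ≤ 3 * ((m:ℝ) * 2^(2*m) / 2) + 2^(2*m) := by
        apply add_le_add _ E6
        linarith [E7]
    _ = (3/2*(m:ℝ) + 1) * 2^(2*m) := by ring

/-- there is a constant `C > 0` such that for every even `N ≥ 2` and every
`k ≥ N`, the degeneracy-averaged variance of the collective Lamb shifts satisfies
`Var(Λ(k)) = 2⁻ᴺ ∑_{j=0}^{N/2} d_j · Tr(L(2j, k - N/2 + j)²) ≤ C·N·k`; i.e. the RMS
collective Lamb shift averaged over all angular momentum subspaces is `O(√(Nk))`. -/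
theorem degeneracy_averaged_variance_bound :
    ∃ C : ℝ, 0 < C ∧ ∀ N k : ℕ, 2 ≤ N → Even N → N ≤ k →
      (1 / 2 ^ N) *
          ∑ j ∈ Finset.range (N / 2 + 1),
            degeneracy N j *
              Matrix.trace
                (lambMatrix (2 * j) (k - N / 2 + j) * lambMatrix (2 * j) (k - N / 2 + j)) ≤
        C * (N : ℝ) * (k : ℝ) := by
  refine ⟨144, by norm_num, ?_⟩
  intro N k hN2 hNe hk
  obtain ⟨m, rfl⟩ := hNe
  rw [show m + m = 2*m from (two_mul m).symm] at *
  have hdd : 2*m/2 = m := by omega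
  rw [hdd]
  have hm1 : 1 ≤ m := by omega
  have hterm : ∀ j ∈ Finset.range (m+1),
      degeneracy (2*m) j *
        Matrix.trace (lambMatrix (2*j) (k - m + j) * lambMatrix (2*j) (k - m + j))
      ≤ degeneracy (2*m) j * (72 * (j:ℝ)^3 * k) := by
    intro j hj
    have hjm : j ≤ m := by
      have := Finset.mem_range.mp hj; omega
    apply mul_le_mul_of_nonneg_left _ (deg_nonneg _ _)
    calc Matrix.trace (lambMatrix (2*j) (k - m + j) * lambMatrix (2*j) (k - m + j))
        ≤ 2*(((2*j:ℕ):ℝ)+1)^2*((2*j:ℕ):ℝ)*((k - m + j : ℕ):ℝ) := trace_lamb_sq_le (2*j) (k-m+j)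
      _ ≤ 72 * (j:ℝ)^3 * k := by
          have hK2k : ((k - m + j : ℕ):ℝ) ≤ 2*(k:ℝ) := by
            have h : k - m + j ≤ 2*k := by omega
            exact_mod_cast h
          have hK0 : (0:ℝ) ≤ ((k - m + j : ℕ):ℝ) := Nat.cast_nonneg _
          rcases Nat.eq_zero_or_pos j with rfl | hj1
          · norm_num
          · have hx1 : (1:ℝ) ≤ (j:ℝ) := by exact_mod_cast hj1
            set x : ℝ := (j:ℝ)
            set K : ℝ := ((k - m + j : ℕ):ℝ)
            have hpoly : 16*x^3+16*x^2+4*x ≤ 36*x^3 := by nlinarith [hx1]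
            have h1 : K*(16*x^3+16*x^2+4*x) ≤ K*(36*x^3) := mul_le_mul_of_nonneg_left hpoly hK0
            have h2 : 36*x^3*K ≤ 36*x^3*(2*(k:ℝ)) := by
              apply mul_le_mul_of_nonneg_left hK2k
              positivity
            have hexp : 2*(((2*j:ℕ):ℝ)+1)^2*((2*j:ℕ):ℝ)*K = K*(16*x^3+16*x^2+4*x) := by
              push_cast
              ring
            rw [hexp]
            calc K*(16*x^3+16*x^2+4*x) ≤ K*(36*x^3) := h1
              _ = 36*x^3*K := by ring
              _ ≤ 36*x^3*(2*(k:ℝ)) := h2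
              _ = 72 * x^3 * k := by ring
  calc (1 / 2 ^ (2*m)) *
          ∑ j ∈ Finset.range (m+1),
            degeneracy (2*m) j *
              Matrix.trace (lambMatrix (2*j) (k - m + j) * lambMatrix (2*j) (k - m + j))
      ≤ (1 / 2 ^ (2*m)) * ∑ j ∈ Finset.range (m+1), degeneracy (2*m) j * (72 * (j:ℝ)^3 * k) := by
        apply mul_le_mul_of_nonneg_left (Finset.sum_le_sum hterm) (by positivity)
    _ = (72 * (k:ℝ) / 2 ^ (2*m)) * ∑ j ∈ Finset.range (m+1), degeneracy (2*m) j * (j:ℝ)^3 := by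
        rw [Finset.mul_sum, Finset.mul_sum]
        apply Finset.sum_congr rfl
        intro j _
        ring
    _ ≤ (72 * (k:ℝ) / 2 ^ (2*m)) * ((3/2*(m:ℝ) + 1) * 2^(2*m)) := by
        apply mul_le_mul_of_nonneg_left (sum_deg_cube_le m) (by positivity)
    _ = 72 * (k:ℝ) * (3/2*(m:ℝ) + 1) := by
        have h2m : (2:ℝ)^(2*m) ≠ 0 := by positivity
        field_simp
    _ ≤ 144 * ((2*m : ℕ):ℝ) * (k:ℝ) := by
        have hmr : (1:ℝ) ≤ (m:ℝ) := by exact_mod_cast hm1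
        have hkr : (0:ℝ) ≤ (k:ℝ) := Nat.cast_nonneg k
        push_cast
        nlinarith [hmr, hkr]
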